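/- Let d ≥ 1, δ = (δ_1,…,δ_d) ∈ (0,π)^d, Δ = max_k δ_k, r > 0, and ξ ∈ ∏_{k=1}^d [-δ_k, δ_k]. Then 1 - ∏_{k=1}^d (1/√π) ∫_{(ξ_k-π)r/√2}^{(ξ_k+π)r/√2} e^{-τ²} dτ ≤ √(2/π) · d e^{-(π-Δ)² r²/2} / ((π-Δ) r). -/

import Mathlib

open Real MeasureTheory intervalIntegral

lemma gauss_integrable' : Integrable (fun t : ℝ => Real.exp (-t ^ 2)) := by
  simpa using integrable_exp_neg_mul_sq (one_pos)

lemma gauss_tail_exact (x : ℝ) :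
    ∫ t in Set.Ioi x, t * Real.exp (-t ^ 2) = Real.exp (-x ^ 2) / 2 := by
  have hderiv : ∀ t ∈ Set.Ici x, HasDerivAt (fun t : ℝ => -Real.exp (-t ^ 2) / 2)
      (t * Real.exp (-t ^ 2)) t := by
    intro t _
    have h1 : HasDerivAt (fun t : ℝ => -t ^ 2) (-(2 * t)) t := by
      simpa using (hasDerivAt_pow 2 t).fun_neg
    have h2 := (h1.exp.fun_neg).div_const 2
    rw [show t * Real.exp (-t ^ 2) = -(Real.exp (-t ^ 2) * -(2 * t)) / 2 by ring]
    exact h2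
  have hint : IntegrableOn (fun t : ℝ => t * Real.exp (-t ^ 2)) (Set.Ioi x) := by
    have := integrable_mul_exp_neg_mul_sq (b := 1) one_pos
    simpa using this.integrableOn
  have htend : Filter.Tendsto (fun t : ℝ => -Real.exp (-t ^ 2) / 2) Filter.atTop (nhds 0) := by
    have h1 : Filter.Tendsto (fun t : ℝ => -t ^ 2) Filter.atTop Filter.atBot := by
      exact Filter.tendsto_neg_atTop_atBot.comp (Filter.tendsto_pow_atTop two_ne_zero)
    have := (Real.tendsto_exp_atBot.comp h1).neg.div_const 2
    simpa using this
  have := integral_Ioi_of_hasDerivAt_of_tendsto' hderiv hint htend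
  rw [this]; ring

lemma gauss_tail_bound {x : ℝ} (hx : 0 < x) :
    ∫ t in Set.Ioi x, Real.exp (-t ^ 2) ≤ Real.exp (-x ^ 2) / (2 * x) := by
  have h1 : ∫ t in Set.Ioi x, Real.exp (-t ^ 2)
      ≤ ∫ t in Set.Ioi x, (1 / x) * (t * Real.exp (-t ^ 2)) := by
    apply setIntegral_mono_on gauss_integrable'.integrableOn
    · have := integrable_mul_exp_neg_mul_sq (b := 1) one_pos
      have h := this.integrableOn (s := Set.Ioi x)
      simpa [IntegrableOn] using (h.const_mul (1 / x))
    · exact measurableSet_Ioi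
    · intro t ht
      have htx : x ≤ t := le_of_lt ht
      have hexp : 0 < Real.exp (-t ^ 2) := Real.exp_pos _
      rw [show (1 / x) * (t * Real.exp (-t ^ 2)) = (t / x) * Real.exp (-t ^ 2) by ring]
      nlinarith [(one_le_div hx).2 htx]
  rw [MeasureTheory.integral_const_mul, gauss_tail_exact] at h1
  calc ∫ t in Set.Ioi x, Real.exp (-t ^ 2) ≤ 1 / x * (Real.exp (-x ^ 2) / 2) := h1
    _ = Real.exp (-x ^ 2) / (2 * x) := by field_simp

lemma gauss_tail_bound' {c x : ℝ} (hc : 0 < c) (hcx : c ≤ x) :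
    ∫ t in Set.Ioi x, Real.exp (-t ^ 2) ≤ Real.exp (-c ^ 2) / (2 * c) := by
  have hx : 0 < x := lt_of_lt_of_le hc hcx
  refine (gauss_tail_bound hx).trans ?_
  apply div_le_div₀ (le_of_lt (Real.exp_pos _))
  · exact Real.exp_le_exp.2 (by nlinarith)
  · linarith
  · linarith

lemma weierstrass_prod {ι : Type*} (s : Finset ι) (f : ι → ℝ)
    (h : ∀ i ∈ s, f i ∈ Set.Icc (0 : ℝ) 1) :
    1 - ∑ i ∈ s, (1 - f i) ≤ ∏ i ∈ s, f i := by
  induction s using Finset.cons_induction with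
  | empty => simp
  | cons a s ha ih =>
    have hfa := h a (Finset.mem_cons_self a s)
    have ihs := ih (fun i hi => h i (Finset.mem_cons_of_mem hi))
    have hS : 0 ≤ ∑ i ∈ s, (1 - f i) := by
      apply Finset.sum_nonneg; intro i hi
      have := (h i (Finset.mem_cons_of_mem hi)).2; linarith
    have hP : 0 ≤ ∏ i ∈ s, f i := by
      apply Finset.prod_nonneg; intro i hi
      exact (h i (Finset.mem_cons_of_mem hi)).1
    rw [Finset.sum_cons, Finset.prod_cons]
    nlinarith [hfa.1, hfa.2]

theorem multivariate_gaussian_window_bound (d : ℕ) (hd : 1 ≤ d) (δ : Fin d → ℝ)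
    (hδ : ∀ k, δ k ∈ Set.Ioo (0 : ℝ) π) (Δ : ℝ) (hΔ : IsGreatest (Set.range δ) Δ)
    (r : ℝ) (hr : 0 < r) (ξ : Fin d → ℝ) (hξ : ∀ k, ξ k ∈ Set.Icc (-(δ k)) (δ k)) :
    1 - ∏ k, (1 / Real.sqrt π) *
        ∫ τ in ((ξ k - π) * r / Real.sqrt 2)..((ξ k + π) * r / Real.sqrt 2), Real.exp (-τ ^ 2)
      ≤ Real.sqrt (2 / π) * ((d : ℝ) * Real.exp (-(π - Δ) ^ 2 * r ^ 2 / 2) / ((π - Δ) * r)) := by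
  obtain ⟨⟨k0, hk0⟩, hub⟩ := hΔ
  have hΔpos : 0 < Δ := hk0 ▸ (hδ k0).1
  have hΔlt : Δ < π := hk0 ▸ (hδ k0).2
  have hs2 : (0 : ℝ) < Real.sqrt 2 := Real.sqrt_pos.2 (by norm_num)
  have hsπ : (0 : ℝ) < Real.sqrt π := Real.sqrt_pos.2 pi_pos
  set c := (π - Δ) * r / Real.sqrt 2 with hc_def
  have hc : 0 < c := div_pos (mul_pos (by linarith) hr) hs2
  set t := Real.exp (-c ^ 2) / (Real.sqrt π * c) with ht_def
  have ht0 : 0 ≤ t := by positivity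
  set p : Fin d → ℝ := fun k => (1 / Real.sqrt π) *
    ∫ τ in ((ξ k - π) * r / Real.sqrt 2)..((ξ k + π) * r / Real.sqrt 2), Real.exp (-τ ^ 2)
    with hp_def
  have key : ∀ k, p k ∈ Set.Icc (0 : ℝ) 1 ∧ 1 - p k ≤ t := by
    intro k
    have hξk := hξ k
    have hδk : δ k ≤ Δ := hub ⟨k, rfl⟩
    have hδkπ : δ k < π := (hδ k).2
    have hδk0 : 0 < δ k := (hδ k).1
    set a := (ξ k - π) * r / Real.sqrt 2 with ha_def
    set b := (ξ k + π) * r / Real.sqrt 2 with hb_def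
    have hab : a ≤ b := by
      rw [ha_def, hb_def]
      gcongr
      linarith [pi_pos]
    have hcb : c ≤ b := by
      rw [hc_def, hb_def]
      gcongr
      linarith [hξk.1]
    have hna : -a = (π - ξ k) * r / Real.sqrt 2 := by rw [ha_def]; ring
    have hca : c ≤ -a := by
      rw [hc_def, hna]
      gcongr
      linarith [hξk.2]
    set T1 := ∫ x in Set.Ioi b, Real.exp (-x ^ 2) with hT1
    set T2 := ∫ x in Set.Ioi (-a), Real.exp (-x ^ 2) with hT2
    have hIic : ∫ x in Set.Iic a, Real.exp (-x ^ 2) = T2 := by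
      have := integral_comp_neg_Iic a (fun s => Real.exp (-s ^ 2))
      simpa using this
    have htotal : (∫ x in Set.Iic b, Real.exp (-x ^ 2)) + T1 = Real.sqrt π := by
      rw [hT1, integral_Iic_add_Ioi gauss_integrable'.integrableOn
        gauss_integrable'.integrableOn]
      simpa using integral_gaussian 1
    have hsub : (∫ x in Set.Iic b, Real.exp (-x ^ 2)) - ∫ x in Set.Iic a, Real.exp (-x ^ 2)
        = ∫ τ in a..b, Real.exp (-τ ^ 2) :=
      integral_Iic_sub_Iic gauss_integrable'.integrableOn
        gauss_integrable'.integrableOn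
    have hI : (∫ τ in a..b, Real.exp (-τ ^ 2)) = Real.sqrt π - T1 - T2 := by
      rw [← hsub, hIic]; linarith [htotal]
    have hT1n : 0 ≤ T1 :=
      MeasureTheory.setIntegral_nonneg measurableSet_Ioi fun x _ => (Real.exp_pos _).le
    have hT2n : 0 ≤ T2 :=
      MeasureTheory.setIntegral_nonneg measurableSet_Ioi fun x _ => (Real.exp_pos _).le
    have hT1b : T1 ≤ Real.exp (-c ^ 2) / (2 * c) := gauss_tail_bound' hc hcb
    have hT2b : T2 ≤ Real.exp (-c ^ 2) / (2 * c) := gauss_tail_bound' hc hca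
    have hInn : 0 ≤ ∫ τ in a..b, Real.exp (-τ ^ 2) :=
      intervalIntegral.integral_nonneg hab fun x _ => (Real.exp_pos _).le
    have hpk : p k = (1 / Real.sqrt π) * ∫ τ in a..b, Real.exp (-τ ^ 2) := rfl
    constructor
    · constructor
      · rw [hpk]; positivity
      · rw [hpk, hI]
        rw [mul_comm, ← div_eq_mul_one_div, div_le_one hsπ]
        linarith
    · have h2 : 1 - p k = (T1 + T2) / Real.sqrt π := by
        rw [hpk, hI]
        field_simp
        ring
      rw [h2, ht_def]
      have he : Real.exp (-c ^ 2) / (2 * c) + Real.exp (-c ^ 2) / (2 * c)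
          = Real.exp (-c ^ 2) / c := by field_simp; ring
      have h4 : T1 + T2 ≤ Real.exp (-c ^ 2) / c := by linarith
      have ht' : Real.exp (-c ^ 2) / (Real.sqrt π * c)
          = (Real.exp (-c ^ 2) / c) / Real.sqrt π := by
        rw [div_div, mul_comm]
      rw [ht']
      gcongr
  have hprod := weierstrass_prod Finset.univ p fun k _ => (key k).1
  have hsum : ∑ k, (1 - p k) ≤ (d : ℝ) * t := by
    calc ∑ k, (1 - p k) ≤ ∑ _k : Fin d, t := Finset.sum_le_sum fun k _ => (key k).2
      _ = (d : ℝ) * t := by simp [Finset.sum_const, Finset.card_univ, nsmul_eq_mul]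
  have hmain : 1 - ∏ k, p k ≤ (d : ℝ) * t := by linarith
  have hcsq : c ^ 2 = (π - Δ) ^ 2 * r ^ 2 / 2 := by
    rw [hc_def, div_pow, Real.sq_sqrt (by norm_num : (0:ℝ) ≤ 2)]
    ring
  have hfin : (d : ℝ) * t
      = Real.sqrt (2 / π) * ((d : ℝ) * Real.exp (-(π - Δ) ^ 2 * r ^ 2 / 2) / ((π - Δ) * r)) := by
    rw [show -(π - Δ) ^ 2 * r ^ 2 / 2 = -c ^ 2 by rw [hcsq]; ring,
      Real.sqrt_div (by norm_num : (0:ℝ) ≤ 2) π]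
    have h2c : Real.sqrt 2 * c = (π - Δ) * r := by
      rw [hc_def]; field_simp
    rw [← h2c, ht_def]
    field_simp
  exact le_trans hmain (le_of_eq hfin)
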